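/- Let $M$ be a left-left Yetter-Drinfeld module over the tensor product bialgebra $H\otimes H^*$. Define $\rho_L(m) = (\mathrm{id}\otimes\varepsilon^*)(m_{[-1]})\otimes m_{[0]}$ and $\rho_R(m) = \sum_i (1\otimes h^i)\cdot m \otimes h_i$. Then $\rho_L$ makes $M$ a left $H$-comodule, $\rho_R$ makes $M$ a right $H$-comodule, and together they make $M$ an $H$-bicomodule, i.e. $(\rho_L\otimes\mathrm{id})\rho_R = (\mathrm{id}\otimes\rho_R)\rho_L$. -/
import Mathlib


/- Common setup: Yetter-Drinfeld-Long bimodules over a bialgebra `H`, and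
Yetter-Drinfeld modules over the tensor product bialgebra `H ⊗ H^*`. -/

open TensorProduct LinearMap Module

noncomputable section

namespace YDL

variable (k : Type) [Field k] (H : Type) [Ring H] [Bialgebra k H]
variable (M : Type) [AddCommGroup M] [Module k M]

/-- Data of an `H`-bimodule, `H`-bicomodule structure on `M`:
left action `aL`, right action `aR`, left coaction `cL`, right coaction `cR`. -/
structure LRData where
  aL : H ⊗[k] M →ₗ[k] M
  aR : M ⊗[k] H →ₗ[k] M
  cL : M →ₗ[k] H ⊗[k] M
  cR : M →ₗ[k] M ⊗[k] H

variable {k H M}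

/-- `M` is a left `H`-module. -/
structure IsLMod (D : LRData k H M) : Prop where
  one_act : ∀ m : M, D.aL (1 ⊗ₜ m) = m
  mul_act : ∀ (g h : H) (m : M), D.aL ((g * h) ⊗ₜ m) = D.aL (g ⊗ₜ D.aL (h ⊗ₜ m))

/-- `M` is a right `H`-module. -/
structure IsRMod (D : LRData k H M) : Prop where
  act_one : ∀ m : M, D.aR (m ⊗ₜ 1) = m
  act_mul : ∀ (m : M) (g h : H), D.aR (m ⊗ₜ (g * h)) = D.aR (D.aR (m ⊗ₜ g) ⊗ₜ h)

/-- `M` is a left `H`-comodule. -/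
structure IsLCom (D : LRData k H M) : Prop where
  coassoc : (TensorProduct.assoc k H H M).toLinearMap ∘ₗ map Coalgebra.comul LinearMap.id ∘ₗ D.cL
      = map LinearMap.id D.cL ∘ₗ D.cL
  counit : (TensorProduct.lid k M).toLinearMap ∘ₗ map Coalgebra.counit LinearMap.id ∘ₗ D.cL
      = LinearMap.id

/-- `M` is a right `H`-comodule. -/
structure IsRCom (D : LRData k H M) : Prop where
  coassoc : (TensorProduct.assoc k M H H).toLinearMap ∘ₗ map D.cR LinearMap.id ∘ₗ D.cR
      = map LinearMap.id Coalgebra.comul ∘ₗ D.cR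
  counit : (TensorProduct.rid k M).toLinearMap ∘ₗ map LinearMap.id Coalgebra.counit ∘ₗ D.cR
      = LinearMap.id

/-- Left-left Yetter-Drinfeld condition (1.1):
`(h₁·m)₍₋₁₎h₂ ⊗ (h₁·m)₍₀₎ = h₁m₍₋₁₎ ⊗ h₂·m₍₀₎`, as maps `H ⊗ M → H ⊗ M`. -/
def Cond1 (D : LRData k H M) : Prop :=
  map (LinearMap.mul' k H ∘ₗ (TensorProduct.comm k H H).toLinearMap) LinearMap.id ∘ₗ
    (TensorProduct.assoc k H H M).symm.toLinearMap ∘ₗ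
    map LinearMap.id (D.cL ∘ₗ D.aL) ∘ₗ
    (TensorProduct.assoc k H H M).toLinearMap ∘ₗ
    map ((TensorProduct.comm k H H).toLinearMap ∘ₗ Coalgebra.comul) LinearMap.id
  = map (LinearMap.mul' k H) D.aL ∘ₗ
    (tensorTensorTensorComm k H H H M).toLinearMap ∘ₗ map Coalgebra.comul D.cL

/-- Left-right Long condition (1.2): `(h·m)₍₀₎ ⊗ (h·m)₍₁₎ = h·m₍₀₎ ⊗ m₍₁₎`. -/
def Cond2 (D : LRData k H M) : Prop :=
  D.cR ∘ₗ D.aL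
  = map D.aL LinearMap.id ∘ₗ (TensorProduct.assoc k H M H).symm.toLinearMap ∘ₗ
      map LinearMap.id D.cR

/-- Right-right Yetter-Drinfeld condition (1.3):
`(m·h₂)₍₀₎ ⊗ h₁(m·h₂)₍₁₎ = m₍₀₎·h₁ ⊗ m₍₁₎h₂`, as maps `M ⊗ H → M ⊗ H`. -/
def Cond3 (D : LRData k H M) : Prop :=
  map LinearMap.id (LinearMap.mul' k H ∘ₗ (TensorProduct.comm k H H).toLinearMap) ∘ₗ
    (TensorProduct.assoc k M H H).toLinearMap ∘ₗ
    map (D.cR ∘ₗ D.aR) LinearMap.id ∘ₗ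
    (TensorProduct.assoc k M H H).symm.toLinearMap ∘ₗ
    map LinearMap.id ((TensorProduct.comm k H H).toLinearMap ∘ₗ Coalgebra.comul)
  = map D.aR (LinearMap.mul' k H) ∘ₗ
    (tensorTensorTensorComm k M H H H).toLinearMap ∘ₗ map D.cR Coalgebra.comul

/-- Right-left Long condition (1.4): `(m·h)₍₋₁₎ ⊗ (m·h)₍₀₎ = m₍₋₁₎ ⊗ m₍₀₎·h`. -/
def Cond4 (D : LRData k H M) : Prop :=
  D.cL ∘ₗ D.aR
  = map LinearMap.id D.aR ∘ₗ (TensorProduct.assoc k H M H).toLinearMap ∘ₗ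
      map D.cL LinearMap.id

/-- `M` with the data `D` is a Yetter-Drinfeld-Long bimodule: it is an `H`-bimodule
and an `H`-bicomodule satisfying the four compatibility conditions. -/
structure IsLR (D : LRData k H M) : Prop where
  lmod : IsLMod D
  rmod : IsRMod D
  lcom : IsLCom D
  rcom : IsRCom D
  bimod : ∀ (h h' : H) (m : M), D.aL (h ⊗ₜ D.aR (m ⊗ₜ h')) = D.aR (D.aL (h ⊗ₜ m) ⊗ₜ h')
  bicom : (TensorProduct.assoc k H M H).toLinearMap ∘ₗ map D.cL LinearMap.id ∘ₗ D.cR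
      = map LinearMap.id D.cR ∘ₗ D.cL
  cond1 : Cond1 D
  cond2 : Cond2 D
  cond3 : Cond3 D
  cond4 : Cond4 D

variable (k H M)

/-- The tensor product bialgebra `H ⊗ H^*` (as a vector space). -/
abbrev X := H ⊗[k] Module.Dual k H

/-- Convolution product on `H^*`: `⟨f*g, h⟩ = ⟨f,h₁⟩⟨g,h₂⟩`. -/
def convL : Module.Dual k H ⊗[k] Module.Dual k H →ₗ[k] Module.Dual k H :=
  (Coalgebra.comul (R := k) (A := H)).dualMap ∘ₗ TensorProduct.dualDistrib k H H

/-- Counit of `H^*`: evaluation at `1`. -/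
def εD : Module.Dual k H →ₗ[k] k := LinearMap.applyₗ (1 : H)

/-- Multiplication of the tensor product bialgebra `H ⊗ H^*`. -/
def μX : X k H ⊗[k] X k H →ₗ[k] X k H :=
  map (LinearMap.mul' k H) (convL k H) ∘ₗ
    (tensorTensorTensorComm k H (Module.Dual k H) H (Module.Dual k H)).toLinearMap

/-- Unit of `H ⊗ H^*`. -/
def oneX : X k H := 1 ⊗ₜ (Coalgebra.counit : Module.Dual k H)

/-- Counit of `H ⊗ H^*`. -/
def εX : X k H →ₗ[k] k := LinearMap.mul' k k ∘ₗ map Coalgebra.counit (εD k H)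

variable [FiniteDimensional k H]

/-- Comultiplication of `H^*` (for finite dimensional `H`): dual of multiplication. -/
def ΔD : Module.Dual k H →ₗ[k] Module.Dual k H ⊗[k] Module.Dual k H :=
  (TensorProduct.dualDistribEquiv k H H).symm.toLinearMap ∘ₗ (LinearMap.mul' k H).dualMap

/-- Comultiplication of the tensor product bialgebra `H ⊗ H^*`. -/
def ΔX : X k H →ₗ[k] X k H ⊗[k] X k H :=
  (tensorTensorTensorComm k H H (Module.Dual k H) (Module.Dual k H)).toLinearMap ∘ₗ
    map Coalgebra.comul (ΔD k H)

/-- The canonical element `∑ hᵢ ⊗ hⁱ ∈ H ⊗ H^*` (dual bases). -/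
def canel : H ⊗[k] Module.Dual k H := coevaluation k H 1

end YDL

end
namespace YDL

noncomputable section
open TensorProduct LinearMap Module

variable (k : Type) [Field k] (H : Type) [Ring H] [Bialgebra k H]
variable (M N P : Type) [AddCommGroup M] [Module k M] [AddCommGroup N] [Module k N]
  [AddCommGroup P] [Module k P]

/-- Data of a module-comodule structure on `M` over `H ⊗ H^*`. -/
structure YDData where
  act : X k H ⊗[k] M →ₗ[k] M
  coact : M →ₗ[k] X k H ⊗[k] M

variable {k H M N P}

/-- `M` is a left `H ⊗ H^*`-module (stated on pure tensors, which span `H ⊗ H^*`). -/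
structure IsXMod (E : YDData k H M) : Prop where
  one_act : ∀ m : M, E.act (oneX k H ⊗ₜ m) = m
  mul_act : ∀ (h h' : H) (f f' : Module.Dual k H) (m : M),
    E.act (((h * h') ⊗ₜ convL k H (f ⊗ₜ f')) ⊗ₜ m)
      = E.act ((h ⊗ₜ f) ⊗ₜ E.act ((h' ⊗ₜ f') ⊗ₜ m))

variable [FiniteDimensional k H]

/-- `M` is a left `H ⊗ H^*`-comodule. -/
structure IsXCom (E : YDData k H M) : Prop where
  coassoc : (TensorProduct.assoc k (X k H) (X k H) M).toLinearMap ∘ₗ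
      map (ΔX k H) LinearMap.id ∘ₗ E.coact = map LinearMap.id E.coact ∘ₗ E.coact
  counit : (TensorProduct.lid k M).toLinearMap ∘ₗ map (εX k H) LinearMap.id ∘ₗ E.coact
      = LinearMap.id

/-- The left-left Yetter-Drinfeld compatibility over `H ⊗ H^*`:
`(x₁·m)₍₋₁₎x₂ ⊗ (x₁·m)₍₀₎ = x₁m₍₋₁₎ ⊗ x₂·m₍₀₎`, as maps `(H ⊗ H^*) ⊗ M → (H ⊗ H^*) ⊗ M`. -/
def CondYD (E : YDData k H M) : Prop :=
  map (μX k H ∘ₗ (TensorProduct.comm k (X k H) (X k H)).toLinearMap) LinearMap.id ∘ₗ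
    (TensorProduct.assoc k (X k H) (X k H) M).symm.toLinearMap ∘ₗ
    map LinearMap.id (E.coact ∘ₗ E.act) ∘ₗ
    (TensorProduct.assoc k (X k H) (X k H) M).toLinearMap ∘ₗ
    map ((TensorProduct.comm k (X k H) (X k H)).toLinearMap ∘ₗ ΔX k H) LinearMap.id
  = map (μX k H) E.act ∘ₗ
    (tensorTensorTensorComm k (X k H) (X k H) (X k H) M).toLinearMap ∘ₗ map (ΔX k H) E.coact

/-- `M` is a left-left Yetter-Drinfeld module over `H ⊗ H^*`. -/
structure IsYD (E : YDData k H M) : Prop where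
  xmod : IsXMod E
  xcom : IsXCom E
  yd : CondYD E

/-! ### The functor `F : 𝓛𝓡(H) → ᴴ⊗ᴴ*YD` -/

/-- `f ⊗ m ↦ ⟨f, m₍₁₎⟩ m₍₀₎`, built from a right coaction `cR`. -/
def evR (cR : M →ₗ[k] M ⊗[k] H) : Module.Dual k H ⊗[k] M →ₗ[k] M :=
  (TensorProduct.lid k M).toLinearMap ∘ₗ map (contractLeft k H) LinearMap.id ∘ₗ
    (TensorProduct.assoc k (Module.Dual k H) H M).symm.toLinearMap ∘ₗ
    map LinearMap.id ((TensorProduct.comm k M H).toLinearMap ∘ₗ cR)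

/-- The `H ⊗ H^*`-action `(h ⊗ f) · m = ⟨f, m₍₁₎⟩ h · m₍₀₎` (formula (2.1)). -/
def Fact (D : LRData k H M) : X k H ⊗[k] M →ₗ[k] M :=
  D.aL ∘ₗ map LinearMap.id (evR D.cR) ∘ₗ
    (TensorProduct.assoc k H (Module.Dual k H) M).toLinearMap

/-- `m ↦ ∑ hⁱ ⊗ m · hᵢ`, built from a right action `aR`. -/
def insD (aR : M ⊗[k] H →ₗ[k] M) : M →ₗ[k] Module.Dual k H ⊗[k] M :=
  map LinearMap.id (aR ∘ₗ (TensorProduct.comm k H M).toLinearMap) ∘ₗ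
    (TensorProduct.assoc k (Module.Dual k H) H M).toLinearMap ∘ₗ
    TensorProduct.mk k (Module.Dual k H ⊗[k] H) M
      ((TensorProduct.comm k H (Module.Dual k H)) (canel k H))

/-- The `H ⊗ H^*`-coaction `ρ(m) = ∑ m₍₋₁₎ ⊗ hⁱ ⊗ m₍₀₎ · hᵢ` (formula (2.2)). -/
def Fco (D : LRData k H M) : M →ₗ[k] X k H ⊗[k] M :=
  (TensorProduct.assoc k H (Module.Dual k H) M).symm.toLinearMap ∘ₗ
    map LinearMap.id (insD D.aR) ∘ₗ D.cL

/-- The functor `F` on objects. -/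
def Fdata (D : LRData k H M) : YDData k H M := ⟨Fact D, Fco D⟩

/-! ### The functor `G : ᴴ⊗ᴴ*YD → 𝓛𝓡(H)` -/

variable (k H)

/-- `h ↦ h ⊗ ε`. -/
def ιH : H →ₗ[k] X k H :=
  (TensorProduct.mk k H (Module.Dual k H)).flip (Coalgebra.counit : Module.Dual k H)

/-- `f ↦ 1 ⊗ f`. -/
def ιD : Module.Dual k H →ₗ[k] X k H := TensorProduct.mk k H (Module.Dual k H) 1

/-- `h ⊗ f ↦ ε*(f) h`. -/
def πH : X k H →ₗ[k] H := (TensorProduct.rid k H).toLinearMap ∘ₗ map LinearMap.id (εD k H)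

/-- `(h ⊗ f) ⊗ h' ↦ ε(h)⟨f, h'⟩`. -/
def ξX : X k H ⊗[k] H →ₗ[k] k :=
  LinearMap.mul' k k ∘ₗ map Coalgebra.counit (contractLeft k H) ∘ₗ
    (TensorProduct.assoc k H (Module.Dual k H) H).toLinearMap

variable {k H}

/-- The restricted left `H`-action `h · m = (h ⊗ ε) · m`. -/
def gL (A : X k H ⊗[k] M →ₗ[k] M) : H ⊗[k] M →ₗ[k] M := A ∘ₗ map (ιH k H) LinearMap.id

/-- The right `H`-action `m · h = ⟨(ε ⊗ id) m₍₋₁₎, h⟩ m₍₀₎`. -/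
def gR (C : M →ₗ[k] X k H ⊗[k] M) : M ⊗[k] H →ₗ[k] M :=
  (TensorProduct.lid k M).toLinearMap ∘ₗ map (ξX k H) LinearMap.id ∘ₗ
    (TensorProduct.assoc k (X k H) H M).symm.toLinearMap ∘ₗ
    map LinearMap.id (TensorProduct.comm k M H).toLinearMap ∘ₗ
    (TensorProduct.assoc k (X k H) M H).toLinearMap ∘ₗ map C LinearMap.id

/-- The left `H`-coaction `ρ_L(m) = (id ⊗ ε*)(m₍₋₁₎) ⊗ m₍₀₎`. -/
def gcL (C : M →ₗ[k] X k H ⊗[k] M) : M →ₗ[k] H ⊗[k] M := map (πH k H) LinearMap.id ∘ₗ C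

/-- The right `H`-coaction `ρ_R(m) = ∑ (1 ⊗ hⁱ) · m ⊗ hᵢ`. -/
def gcR (A : X k H ⊗[k] M →ₗ[k] M) : M →ₗ[k] M ⊗[k] H :=
  map (A ∘ₗ map (ιD k H) LinearMap.id) LinearMap.id ∘ₗ
    (TensorProduct.assoc k (Module.Dual k H) M H).symm.toLinearMap ∘ₗ
    map LinearMap.id (TensorProduct.comm k H M).toLinearMap ∘ₗ
    (TensorProduct.assoc k (Module.Dual k H) H M).toLinearMap ∘ₗ
    map (TensorProduct.comm k H (Module.Dual k H)).toLinearMap LinearMap.id ∘ₗ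
    TensorProduct.mk k (H ⊗[k] Module.Dual k H) M (canel k H)

/-- The functor `G` on objects. -/
def Gdata (E : YDData k H M) : LRData k H M :=
  ⟨gL E.act, gR E.coact, gcL E.coact, gcR E.act⟩

end

end YDL
namespace YDL

noncomputable section
open TensorProduct LinearMap Module

variable {k : Type} [Field k] {H : Type} [Ring H] [Bialgebra k H]
variable {M N P : Type} [AddCommGroup M] [Module k M] [AddCommGroup N] [Module k N]
  [AddCommGroup P] [Module k P]

/-- The tensor product of two Yetter-Drinfeld-Long bimodule structures, with diagonal
actions and codiagonal coactions. -/
def tensorLR (D : LRData k H M) (D' : LRData k H N) : LRData k H (M ⊗[k] N) where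
  aL := map D.aL D'.aL ∘ₗ (tensorTensorTensorComm k H H M N).toLinearMap ∘ₗ
    map Coalgebra.comul LinearMap.id
  aR := map D.aR D'.aR ∘ₗ (tensorTensorTensorComm k M N H H).toLinearMap ∘ₗ
    map LinearMap.id Coalgebra.comul
  cL := map (LinearMap.mul' k H) LinearMap.id ∘ₗ
    (tensorTensorTensorComm k H M H N).toLinearMap ∘ₗ map D.cL D'.cL
  cR := map LinearMap.id (LinearMap.mul' k H) ∘ₗ
    (tensorTensorTensorComm k M H N H).toLinearMap ∘ₗ map D.cR D'.cR

variable [FiniteDimensional k H]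

/-- The tensor product of two Yetter-Drinfeld module structures over `H ⊗ H^*`. -/
def tensorYD (E : YDData k H M) (E' : YDData k H N) : YDData k H (M ⊗[k] N) where
  act := map E.act E'.act ∘ₗ (tensorTensorTensorComm k (X k H) (X k H) M N).toLinearMap ∘ₗ
    map (ΔX k H) LinearMap.id
  coact := map (μX k H) LinearMap.id ∘ₗ
    (tensorTensorTensorComm k (X k H) M (X k H) N).toLinearMap ∘ₗ map E.coact E'.coact

/-- A linear map `φ : M → N` is a morphism of Yetter-Drinfeld-Long bimodules
(`H`-bilinear and `H`-bicolinear). -/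
def LRHom (D : LRData k H M) (D' : LRData k H N) (φ : M →ₗ[k] N) : Prop :=
  φ ∘ₗ D.aL = D'.aL ∘ₗ map LinearMap.id φ ∧
  φ ∘ₗ D.aR = D'.aR ∘ₗ map φ LinearMap.id ∧
  D'.cL ∘ₗ φ = map LinearMap.id φ ∘ₗ D.cL ∧
  D'.cR ∘ₗ φ = map φ LinearMap.id ∘ₗ D.cR

/-- A linear map `φ : M → N` is a morphism of Yetter-Drinfeld modules over `H ⊗ H^*`
(`H ⊗ H^*`-linear and colinear). -/
def YDHom (E : YDData k H M) (E' : YDData k H N) (φ : M →ₗ[k] N) : Prop :=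
  φ ∘ₗ E.act = E'.act ∘ₗ map LinearMap.id φ ∧
  E'.coact ∘ₗ φ = map LinearMap.id φ ∘ₗ E.coact

/-- The braiding of `𝓛𝓡(H)`: `m ⊗ n ↦ m₍₋₁₎·n₍₀₎ ⊗ m₍₀₎·n₍₁₎`. -/
def cLR (D : LRData k H M) (D' : LRData k H N) : M ⊗[k] N →ₗ[k] N ⊗[k] M :=
  map D'.aL D.aR ∘ₗ (tensorTensorTensorComm k H M N H).toLinearMap ∘ₗ map D.cL D'.cR

/-- The inverse braiding of `𝓛𝓡(H)` (`T` is the inverse of the antipode):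
`n ⊗ m ↦ m₍₀₎·S⁻¹(n₍₁₎) ⊗ S⁻¹(m₍₋₁₎)·n₍₀₎`. -/
def cLRinv (D : LRData k H M) (D' : LRData k H N) (T : H →ₗ[k] H) :
    N ⊗[k] M →ₗ[k] M ⊗[k] N :=
  map D.aR D'.aL ∘ₗ
    (TensorProduct.comm k (H ⊗[k] N) (M ⊗[k] H)).toLinearMap ∘ₗ
    (tensorTensorTensorComm k H M N H).toLinearMap ∘ₗ
    (TensorProduct.comm k (N ⊗[k] H) (H ⊗[k] M)).toLinearMap ∘ₗ
    map (map LinearMap.id T) (map T LinearMap.id) ∘ₗ map D'.cR D.cL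

/-- The braiding of the Yetter-Drinfeld category over `H ⊗ H^*`:
`m ⊗ n ↦ m₍₋₁₎·n ⊗ m₍₀₎`, built from the coaction on `M` and the action on `N`. -/
def cYD (C : M →ₗ[k] X k H ⊗[k] M) (A' : X k H ⊗[k] N →ₗ[k] N) : M ⊗[k] N →ₗ[k] N ⊗[k] M :=
  map A' LinearMap.id ∘ₗ (TensorProduct.assoc k (X k H) N M).symm.toLinearMap ∘ₗ
    map LinearMap.id (TensorProduct.comm k M N).toLinearMap ∘ₗ
    (TensorProduct.assoc k (X k H) M N).toLinearMap ∘ₗ map C LinearMap.id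

end

end YDL
namespace YDL
open TensorProduct LinearMap Module
noncomputable section Aux
variable {k : Type} [Field k] {H : Type} [Ring H] [Bialgebra k H]
variable {M : Type} [AddCommGroup M] [Module k M]

@[simp] lemma πH_tmul (h : H) (f : Module.Dual k H) : πH k H (h ⊗ₜ[k] f) = f 1 • h := by
  simp [πH, εD]

lemma εX_tmul (h : H) (f : Module.Dual k H) :
    εX k H (h ⊗ₜ[k] f) = Coalgebra.counit h * f 1 := by
  simp [εX, εD]

lemma counit_comp_πH : (Coalgebra.counit : H →ₗ[k] k) ∘ₗ πH k H = εX k H := by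
  apply TensorProduct.ext'
  intro h f
  simp [εX_tmul, mul_comm]

variable [FiniteDimensional k H]

lemma dualDistrib_ΔD (f : Module.Dual k H) :
    TensorProduct.dualDistrib k H H (ΔD k H f) = (LinearMap.mul' k H).dualMap f := by
  have h1 : ∀ y : Module.Dual k H ⊗[k] Module.Dual k H,
      TensorProduct.dualDistrib k H H y = TensorProduct.dualDistribEquiv k H H y := fun _ => rfl
  rw [ΔD]
  simp only [LinearMap.coe_comp, LinearEquiv.coe_coe, Function.comp_apply]
  rw [h1]
  exact (TensorProduct.dualDistribEquiv k H H).apply_symm_apply _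

lemma ΔD_counit_r (f : Module.Dual k H) :
    TensorProduct.rid k (Module.Dual k H)
      (map LinearMap.id (εD k H) (ΔD k H f)) = f := by
  have key : ∀ (y : Module.Dual k H ⊗[k] Module.Dual k H) (a : H),
      (TensorProduct.rid k (Module.Dual k H) (map LinearMap.id (εD k H) y)) a
        = TensorProduct.dualDistrib k H H y (a ⊗ₜ[k] (1 : H)) := by
    intro y a
    induction y using TensorProduct.induction_on with
    | zero => simp
    | tmul g g' => simp [εD, mul_comm]
    | add u v hu hv => simp [map_add, LinearMap.add_apply, hu, hv]
  ext a
  rw [key, dualDistrib_ΔD]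
  simp [LinearMap.dualMap_apply, LinearMap.mul'_apply]

lemma ΔD_counit_l (f : Module.Dual k H) :
    TensorProduct.lid k (Module.Dual k H)
      (map (εD k H) LinearMap.id (ΔD k H f)) = f := by
  have key : ∀ (y : Module.Dual k H ⊗[k] Module.Dual k H) (a : H),
      (TensorProduct.lid k (Module.Dual k H) (map (εD k H) LinearMap.id y)) a
        = TensorProduct.dualDistrib k H H y ((1 : H) ⊗ₜ[k] a) := by
    intro y a
    induction y using TensorProduct.induction_on with
    | zero => simp
    | tmul g g' => simp [εD]
    | add u v hu hv => simp [map_add, LinearMap.add_apply, hu, hv]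
  ext a
  rw [key, dualDistrib_ΔD]
  simp [LinearMap.dualMap_apply, LinearMap.mul'_apply]

end Aux
set_option synthInstance.maxHeartbeats 1000000
set_option maxHeartbeats 1600000
set_option maxRecDepth 8000
noncomputable section Aux2
variable {k : Type} [Field k] {H : Type} [Ring H] [Bialgebra k H]
variable {M : Type} [AddCommGroup M] [Module k M] [FiniteDimensional k H]

lemma e2_eq (y : Module.Dual k H ⊗[k] Module.Dual k H) :
    LinearMap.mul' k k (map (εD k H) (εD k H) y)
      = TensorProduct.dualDistrib k H H y ((1 : H) ⊗ₜ[k] (1 : H)) := by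
  induction y using TensorProduct.induction_on with
  | zero => simp
  | tmul g g' => simp [εD, LinearMap.mul'_apply]
  | add u v hu hv => simp [map_add, LinearMap.add_apply, hu, hv]

lemma map_πH_πH_tttComm (u : H ⊗[k] H) (y : Module.Dual k H ⊗[k] Module.Dual k H) :
    map (πH k H) (πH k H)
        (tensorTensorTensorComm k H H (Module.Dual k H) (Module.Dual k H) (u ⊗ₜ[k] y))
      = LinearMap.mul' k k (map (εD k H) (εD k H) y) • u := by
  induction u using TensorProduct.induction_on with
  | zero => simp
  | tmul h h' =>
    induction y using TensorProduct.induction_on with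
    | zero => simp
    | tmul g g' =>
      simp only [TensorProduct.tensorTensorTensorComm_tmul, TensorProduct.map_tmul, πH_tmul,
        TensorProduct.smul_tmul_smul, εD, LinearMap.mul'_apply, LinearMap.applyₗ_apply_apply]
    | add a b ha hb => simp only [TensorProduct.tmul_add, map_add, ha, hb, LinearMap.add_apply,
        add_smul]
  | add a b ha hb => simp only [TensorProduct.add_tmul, map_add, ha, hb, smul_add]

lemma map_πH_πH_ΔX : map (πH k H) (πH k H) ∘ₗ ΔX k H
    = (Coalgebra.comul : H →ₗ[k] H ⊗[k] H) ∘ₗ πH k H := by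
  apply TensorProduct.ext'
  intro h f
  simp only [LinearMap.coe_comp, Function.comp_apply, ΔX, LinearEquiv.coe_coe,
    TensorProduct.map_tmul, πH_tmul]
  rw [map_πH_πH_tttComm, e2_eq, dualDistrib_ΔD]
  simp [LinearMap.dualMap_apply, LinearMap.mul'_apply, map_smul]
end Aux2
noncomputable section Aux3
variable {k : Type} [Field k] {H : Type} [Ring H] [Bialgebra k H]
variable {M : Type} [AddCommGroup M] [Module k M] [FiniteDimensional k H]

lemma isLCom_of_YD (E : YDData k H M) (hE : IsYD E) : IsLCom (Gdata E) := by
  constructor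
  · -- coassoc
    show (TensorProduct.assoc k H H M).toLinearMap ∘ₗ map Coalgebra.comul LinearMap.id ∘ₗ
        (map (πH k H) LinearMap.id ∘ₗ E.coact)
      = map LinearMap.id (map (πH k H) LinearMap.id ∘ₗ E.coact) ∘ₗ
        (map (πH k H) LinearMap.id ∘ₗ E.coact)
    have c1 : (TensorProduct.assoc k H H M).toLinearMap ∘ₗ map Coalgebra.comul LinearMap.id ∘ₗ
        (map (πH k H) LinearMap.id ∘ₗ E.coact)
      = map (πH k H) (map (πH k H) LinearMap.id) ∘ₗ
          ((TensorProduct.assoc k (X k H) (X k H) M).toLinearMap ∘ₗ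
            map (ΔX k H) LinearMap.id ∘ₗ E.coact) := by
      apply LinearMap.ext; intro m
      simp only [LinearMap.comp_apply, LinearEquiv.coe_coe]
      rw [TensorProduct.map_map_assoc]
      congr 1
      have : map ((Coalgebra.comul : H →ₗ[k] H ⊗[k] H) ∘ₗ πH k H) ((LinearMap.id : M →ₗ[k] M) ∘ₗ LinearMap.id)
          = map ((map (πH k H) (πH k H)) ∘ₗ ΔX k H) (LinearMap.id ∘ₗ LinearMap.id) := by
        rw [map_πH_πH_ΔX]
      rw [TensorProduct.map_comp, TensorProduct.map_comp] at this
      exact LinearMap.congr_fun this (E.coact m)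
    have c2 : map LinearMap.id (map (πH k H) LinearMap.id ∘ₗ E.coact) ∘ₗ
          (map (πH k H) LinearMap.id ∘ₗ E.coact)
        = map (πH k H) (map (πH k H) LinearMap.id) ∘ₗ
            ((map LinearMap.id E.coact) ∘ₗ E.coact) := by
      apply LinearMap.ext; intro m
      simp only [LinearMap.comp_apply]
      have e1 : map LinearMap.id (map (πH k H) LinearMap.id ∘ₗ E.coact) ∘ₗ
            map (πH k H) LinearMap.id
          = map (πH k H) (map (πH k H) LinearMap.id) ∘ₗ map LinearMap.id E.coact := by
        rw [← TensorProduct.map_comp, ← TensorProduct.map_comp]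
        simp only [LinearMap.comp_id, LinearMap.id_comp]
      exact LinearMap.congr_fun e1 (E.coact m)
    rw [c1, c2, hE.xcom.coassoc]
  · -- counit
    show (TensorProduct.lid k M).toLinearMap ∘ₗ map Coalgebra.counit LinearMap.id ∘ₗ
        (map (πH k H) LinearMap.id ∘ₗ E.coact) = LinearMap.id
    have : map (Coalgebra.counit ∘ₗ πH k H) (LinearMap.id ∘ₗ (LinearMap.id : M →ₗ[k] M))
        = map (εX k H) LinearMap.id := by rw [counit_comp_πH, LinearMap.comp_id]
    rw [TensorProduct.map_comp] at this
    calc (TensorProduct.lid k M).toLinearMap ∘ₗ map Coalgebra.counit LinearMap.id ∘ₗ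
        (map (πH k H) LinearMap.id ∘ₗ E.coact)
        = (TensorProduct.lid k M).toLinearMap ∘ₗ
            (map Coalgebra.counit LinearMap.id ∘ₗ map (πH k H) LinearMap.id) ∘ₗ E.coact := by
          rw [LinearMap.comp_assoc]
      _ = (TensorProduct.lid k M).toLinearMap ∘ₗ map (εX k H) LinearMap.id ∘ₗ E.coact := by
          rw [← this]
      _ = LinearMap.id := hE.xcom.counit

end Aux3
noncomputable section Aux4
set_option synthInstance.maxHeartbeats 1000000
set_option maxHeartbeats 1600000
set_option maxRecDepth 8000
variable {k : Type} [Field k] {H : Type} [Ring H] [Bialgebra k H]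
variable {M : Type} [AddCommGroup M] [Module k M] [FiniteDimensional k H]

lemma gcR_apply (A : X k H ⊗[k] M →ₗ[k] M) (m : M) :
    gcR A m = ∑ i : Basis.ofVectorSpaceIndex k H,
      A (((1 : H) ⊗ₜ[k] (Basis.ofVectorSpace k H).coord i) ⊗ₜ[k] m)
        ⊗ₜ[k] (Basis.ofVectorSpace k H) i := by
  simp [gcR, canel, coevaluation_apply_one, TensorProduct.sum_tmul, map_sum, ιD,
    TensorProduct.mk_apply]

lemma sum_coord (f : Module.Dual k H) :
    ∑ i : Basis.ofVectorSpaceIndex k H,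
      f ((Basis.ofVectorSpace k H) i) • (Basis.ofVectorSpace k H).coord i = f := by
  classical
  conv_rhs => rw [← (Basis.ofVectorSpace k H).dualBasis.sum_repr f]
  simp [Basis.dualBasis_repr, Basis.coe_dualBasis]

lemma act_expand (A : X k H ⊗[k] M →ₗ[k] M) (f : Module.Dual k H) (m : M) :
    A (((1 : H) ⊗ₜ[k] f) ⊗ₜ[k] m)
      = ∑ l : Basis.ofVectorSpaceIndex k H,
          f ((Basis.ofVectorSpace k H) l) •
            A (((1 : H) ⊗ₜ[k] (Basis.ofVectorSpace k H).coord l) ⊗ₜ[k] m) := by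
  conv_lhs => rw [← sum_coord f]
  simp only [TensorProduct.tmul_sum, TensorProduct.sum_tmul, map_sum, TensorProduct.tmul_smul]
  refine Finset.sum_congr rfl fun l _ => ?_
  rw [← TensorProduct.smul_tmul', map_smul]

lemma expand2 (u : H ⊗[k] H) :
    ∑ j : Basis.ofVectorSpaceIndex k H, ∑ i : Basis.ofVectorSpaceIndex k H,
      (TensorProduct.dualDistrib k H H
          ((Basis.ofVectorSpace k H).coord j ⊗ₜ[k] (Basis.ofVectorSpace k H).coord i) u) •
        ((Basis.ofVectorSpace k H) j ⊗ₜ[k] (Basis.ofVectorSpace k H) i) = u := by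
  set b := Basis.ofVectorSpace k H
  induction u using TensorProduct.induction_on with
  | zero => simp
  | tmul x y =>
    have : ∀ j i, (TensorProduct.dualDistrib k H H (b.coord j ⊗ₜ[k] b.coord i) (x ⊗ₜ[k] y)) •
        (b j ⊗ₜ[k] b i) = (b.coord j x • b j) ⊗ₜ[k] (b.coord i y • b i) := by
      intro j i
      rw [TensorProduct.dualDistrib_apply, TensorProduct.smul_tmul_smul]
    simp only [this, ← TensorProduct.tmul_sum, ← TensorProduct.sum_tmul, Basis.coord_apply]
    rw [b.sum_repr, b.sum_repr]
  | add u v hu hv =>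
    simp only [map_add, add_smul, Finset.sum_add_distrib, hu, hv]

lemma convL_eval (g g' : Module.Dual k H) (h : H) :
    convL k H (g ⊗ₜ[k] g') h
      = TensorProduct.dualDistrib k H H (g ⊗ₜ[k] g') (Coalgebra.comul h) := by
  simp [convL, LinearMap.dualMap_apply]

end Aux4
noncomputable section Aux5
set_option synthInstance.maxHeartbeats 1000000
set_option maxHeartbeats 1600000
set_option maxRecDepth 8000
variable {k : Type} [Field k] {H : Type} [Ring H] [Bialgebra k H]
variable {M : Type} [AddCommGroup M] [Module k M] [FiniteDimensional k H]

lemma sum_swap3 {V : Type} [AddCommMonoid V] {ι : Type} [Fintype ι] (t : ι → ι → ι → V) :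
    ∑ i, ∑ j, ∑ l, t i j l = ∑ i, ∑ j, ∑ l, t l j i := by
  rw [Finset.sum_comm]
  rw [show ∑ j, ∑ i, ∑ l, t i j l = ∑ j, ∑ l, ∑ i, t i j l from
    Finset.sum_congr rfl fun j _ => Finset.sum_comm]
  rw [Finset.sum_comm]

lemma isRCom_of_YD (E : YDData k H M) (hE : IsYD E) : IsRCom (Gdata E) := by
  constructor
  · -- coassoc
    apply LinearMap.ext; intro m
    show (TensorProduct.assoc k M H H) (map (gcR E.act) LinearMap.id (gcR E.act m))
      = map LinearMap.id Coalgebra.comul (gcR E.act m)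
    rw [gcR_apply]
    simp only [_root_.map_sum, TensorProduct.map_tmul, LinearMap.id_coe, id_eq]
    have hact : ∀ i j, E.act (((1:H) ⊗ₜ[k] (Basis.ofVectorSpace k H).coord j) ⊗ₜ[k]
          E.act (((1:H) ⊗ₜ[k] (Basis.ofVectorSpace k H).coord i) ⊗ₜ[k] m))
        = E.act (((1:H) ⊗ₜ[k] convL k H ((Basis.ofVectorSpace k H).coord j ⊗ₜ[k]
            (Basis.ofVectorSpace k H).coord i)) ⊗ₜ[k] m) := by
      intro i j
      rw [← hE.xmod.mul_act, one_mul]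
    calc ∑ i, (TensorProduct.assoc k M H H)
          ((gcR E.act (E.act (((1:H) ⊗ₜ[k] (Basis.ofVectorSpace k H).coord i) ⊗ₜ[k] m)))
            ⊗ₜ[k] (Basis.ofVectorSpace k H) i)
        = ∑ i, ∑ j, ∑ l, convL k H ((Basis.ofVectorSpace k H).coord j ⊗ₜ[k]
              (Basis.ofVectorSpace k H).coord i) ((Basis.ofVectorSpace k H) l) •
            (E.act (((1:H) ⊗ₜ[k] (Basis.ofVectorSpace k H).coord l) ⊗ₜ[k] m)
              ⊗ₜ[k] ((Basis.ofVectorSpace k H) j ⊗ₜ[k] (Basis.ofVectorSpace k H) i)) := by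
          refine Finset.sum_congr rfl fun i _ => ?_
          rw [gcR_apply, TensorProduct.sum_tmul, map_sum]
          refine Finset.sum_congr rfl fun j _ => ?_
          rw [TensorProduct.assoc_tmul, hact, act_expand, TensorProduct.sum_tmul]
          refine Finset.sum_congr rfl fun l _ => ?_
          rw [TensorProduct.smul_tmul']
      _ = ∑ i, ∑ j, ∑ l, convL k H ((Basis.ofVectorSpace k H).coord j ⊗ₜ[k]
              (Basis.ofVectorSpace k H).coord l) ((Basis.ofVectorSpace k H) i) •
            (E.act (((1:H) ⊗ₜ[k] (Basis.ofVectorSpace k H).coord i) ⊗ₜ[k] m)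
              ⊗ₜ[k] ((Basis.ofVectorSpace k H) j ⊗ₜ[k] (Basis.ofVectorSpace k H) l)) := by
          exact sum_swap3 _
      _ = ∑ i, E.act (((1:H) ⊗ₜ[k] (Basis.ofVectorSpace k H).coord i) ⊗ₜ[k] m)
            ⊗ₜ[k] Coalgebra.comul ((Basis.ofVectorSpace k H) i) := by
          refine Finset.sum_congr rfl fun i _ => ?_
          simp only [← TensorProduct.tmul_smul, ← TensorProduct.tmul_sum]
          rw [← expand2 (Coalgebra.comul ((Basis.ofVectorSpace k H) i))]
          simp only [convL_eval, TensorProduct.tmul_sum, TensorProduct.tmul_smul]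
  · -- counit
    apply LinearMap.ext; intro m
    show TensorProduct.rid k M (map LinearMap.id Coalgebra.counit (gcR E.act m)) = m
    rw [gcR_apply]
    simp only [_root_.map_sum, TensorProduct.map_tmul, LinearMap.id_coe, id_eq, TensorProduct.rid_tmul]
    rw [← act_expand E.act Coalgebra.counit m]
    exact hE.xmod.one_act m

end Aux5
noncomputable section Aux6
set_option synthInstance.maxHeartbeats 1000000
set_option maxHeartbeats 1600000
set_option maxRecDepth 8000
variable {k : Type} [Field k] {H : Type} [Ring H] [Bialgebra k H]
variable {M : Type} [AddCommGroup M] [Module k M] [FiniteDimensional k H]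

lemma tttComm_one_one (y : Module.Dual k H ⊗[k] Module.Dual k H) :
    tensorTensorTensorComm k H H (Module.Dual k H) (Module.Dual k H)
        (((1:H) ⊗ₜ[k] (1:H)) ⊗ₜ[k] y)
      = map (ιD k H) (ιD k H) y := by
  induction y using TensorProduct.induction_on with
  | zero => simp
  | tmul g g' => simp [ιD]
  | add u v hu hv => simp only [TensorProduct.tmul_add, map_add, hu, hv]

lemma ΔX_ιD (f : Module.Dual k H) :
    ΔX k H ((1:H) ⊗ₜ[k] f) = map (ιD k H) (ιD k H) (ΔD k H f) := by
  show (tensorTensorTensorComm k H H (Module.Dual k H) (Module.Dual k H)).toLinearMap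
      (map Coalgebra.comul (ΔD k H) ((1:H) ⊗ₜ[k] f)) = _
  rw [TensorProduct.map_tmul, Bialgebra.comul_one, Algebra.TensorProduct.one_def]
  exact tttComm_one_one _

lemma convL_one (u g : Module.Dual k H) : convL k H (u ⊗ₜ[k] g) 1 = u 1 * g 1 := by
  rw [convL_eval, Bialgebra.comul_one, Algebra.TensorProduct.one_def,
    TensorProduct.dualDistrib_apply]

lemma πH_μX_r (g : Module.Dual k H) (x : X k H) :
    πH k H (μX k H (x ⊗ₜ[k] ((1:H) ⊗ₜ[k] g))) = g 1 • πH k H x := by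
  induction x using TensorProduct.induction_on with
  | zero => simp
  | tmul a u =>
    show πH k H ((map (LinearMap.mul' k H) (convL k H))
      (tensorTensorTensorComm k H (Module.Dual k H) H (Module.Dual k H)
        ((a ⊗ₜ[k] u) ⊗ₜ[k] ((1:H) ⊗ₜ[k] g)))) = _
    rw [TensorProduct.tensorTensorTensorComm_tmul, TensorProduct.map_tmul]
    rw [πH_tmul, convL_one, LinearMap.mul'_apply, mul_one, πH_tmul, smul_smul, mul_comm]
  | add u v hu hv => simp only [TensorProduct.add_tmul, map_add, hu, hv, smul_add]

lemma πH_μX_l (g : Module.Dual k H) (x : X k H) :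
    πH k H (μX k H (((1:H) ⊗ₜ[k] g) ⊗ₜ[k] x)) = g 1 • πH k H x := by
  induction x using TensorProduct.induction_on with
  | zero => simp
  | tmul a u =>
    show πH k H ((map (LinearMap.mul' k H) (convL k H))
      (tensorTensorTensorComm k H (Module.Dual k H) H (Module.Dual k H)
        (((1:H) ⊗ₜ[k] g) ⊗ₜ[k] (a ⊗ₜ[k] u)))) = _
    rw [TensorProduct.tensorTensorTensorComm_tmul, TensorProduct.map_tmul]
    rw [πH_tmul, convL_one, LinearMap.mul'_apply, one_mul, πH_tmul, smul_smul]
  | add u v hu hv => simp only [TensorProduct.tmul_add, map_add, hu, hv, smul_add]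

lemma step1 (g : Module.Dual k H) (z : X k H ⊗[k] M) :
    map (πH k H) LinearMap.id
      ((map (μX k H ∘ₗ (TensorProduct.comm k (X k H) (X k H)).toLinearMap) LinearMap.id)
        ((TensorProduct.assoc k (X k H) (X k H) M).symm (((1:H) ⊗ₜ[k] g) ⊗ₜ[k] z)))
      = g 1 • map (πH k H) LinearMap.id z := by
  induction z using TensorProduct.induction_on with
  | zero => simp
  | tmul x m₀ =>
    rw [TensorProduct.assoc_symm_tmul]
    simp only [TensorProduct.map_tmul, LinearMap.comp_apply, LinearEquiv.coe_coe,
      TensorProduct.comm_tmul, LinearMap.id_coe, id_eq]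
    rw [πH_μX_r, TensorProduct.smul_tmul']
  | add u v hu hv => simp only [TensorProduct.tmul_add, map_add, hu, hv, smul_add]

lemma lid_comm_εD (w : Module.Dual k H ⊗[k] Module.Dual k H) :
    TensorProduct.lid k (Module.Dual k H)
        (map (εD k H) LinearMap.id (TensorProduct.comm k _ _ w))
      = TensorProduct.rid k (Module.Dual k H) (map LinearMap.id (εD k H) w) := by
  induction w using TensorProduct.induction_on with
  | zero => simp
  | tmul g g' => simp
  | add u v hu hv => simp only [map_add, hu, hv]

end Aux6
noncomputable section Aux7
set_option synthInstance.maxHeartbeats 1000000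
set_option maxHeartbeats 1600000
set_option maxRecDepth 8000
variable {k : Type} [Field k] {H : Type} [Ring H] [Bialgebra k H]
variable {M : Type} [AddCommGroup M] [Module k M] [FiniteDimensional k H]

lemma keyL (E : YDData k H M) (m : M) (y : Module.Dual k H ⊗[k] Module.Dual k H) :
    map (πH k H) LinearMap.id
      ((map (μX k H ∘ₗ (TensorProduct.comm k (X k H) (X k H)).toLinearMap) LinearMap.id)
        ((TensorProduct.assoc k (X k H) (X k H) M).symm
          ((map LinearMap.id (E.coact ∘ₗ E.act))
            ((TensorProduct.assoc k (X k H) (X k H) M)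
              ((map (ιD k H) (ιD k H) y) ⊗ₜ[k] m)))))
    = map (πH k H) LinearMap.id (E.coact (E.act
        (((1:H) ⊗ₜ[k] (TensorProduct.lid k (Module.Dual k H)
            (map (εD k H) LinearMap.id y))) ⊗ₜ[k] m))) := by
  induction y using TensorProduct.induction_on with
  | zero => simp
  | tmul g g' =>
    simp only [TensorProduct.map_tmul, ιD, TensorProduct.mk_apply, TensorProduct.assoc_tmul,
      LinearMap.comp_apply, LinearMap.id_coe, id_eq, TensorProduct.lid_tmul, εD,
      LinearMap.applyₗ_apply_apply]
    rw [step1]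
    rw [show ((1:H) ⊗ₜ[k] (g 1 • g')) ⊗ₜ[k] m = g 1 • (((1:H) ⊗ₜ[k] g') ⊗ₜ[k] m) from by
      rw [TensorProduct.tmul_smul, ← TensorProduct.smul_tmul']]
    simp only [map_smul]
  | add u v hu hv =>
    simp only [map_add, TensorProduct.add_tmul, LinearMap.add_apply, hu, hv]
    rw [TensorProduct.tmul_add, TensorProduct.add_tmul, map_add, map_add, map_add]

lemma keyR (E : YDData k H M) (y : Module.Dual k H ⊗[k] Module.Dual k H) (z : X k H ⊗[k] M) :
    map (πH k H) LinearMap.id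
      ((map (μX k H) E.act)
        ((tensorTensorTensorComm k (X k H) (X k H) (X k H) M)
          ((map (ιD k H) (ιD k H) y) ⊗ₜ[k] z)))
    = map (πH k H) (E.act ∘ₗ TensorProduct.mk k (X k H) M
        ((1:H) ⊗ₜ[k] (TensorProduct.lid k (Module.Dual k H)
          (map (εD k H) LinearMap.id y)))) z := by
  induction y using TensorProduct.induction_on with
  | zero =>
    simp [TensorProduct.map_zero_right, LinearMap.comp_zero]
  | tmul g g' =>
    induction z using TensorProduct.induction_on with
    | zero => simp
    | tmul x m₀ =>
      simp only [TensorProduct.map_tmul, ιD, TensorProduct.mk_apply,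
        TensorProduct.tensorTensorTensorComm_tmul, LinearMap.comp_apply,
        LinearMap.id_coe, id_eq, TensorProduct.lid_tmul, εD, LinearMap.applyₗ_apply_apply]
      rw [πH_μX_l]
      rw [show ((1:H) ⊗ₜ[k] (g 1 • g')) ⊗ₜ[k] m₀ = g 1 • (((1:H) ⊗ₜ[k] g') ⊗ₜ[k] m₀) from by
        rw [TensorProduct.tmul_smul, ← TensorProduct.smul_tmul']]
      rw [map_smul, TensorProduct.tmul_smul, ← TensorProduct.smul_tmul']
    | add u v hu hv =>
      simp only [TensorProduct.tmul_add, map_add, hu, hv]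
  | add u v hu hv =>
    simp only [map_add, TensorProduct.add_tmul, LinearMap.add_apply, hu, hv]
    have : ∀ (c d : Module.Dual k H),
        TensorProduct.mk k (X k H) M ((1:H) ⊗ₜ[k] (c + d))
          = TensorProduct.mk k (X k H) M ((1:H) ⊗ₜ[k] c)
            + TensorProduct.mk k (X k H) M ((1:H) ⊗ₜ[k] d) := by
      intro c d
      apply LinearMap.ext; intro m₀
      simp [TensorProduct.tmul_add, TensorProduct.add_tmul]
    rw [this, LinearMap.comp_add, TensorProduct.map_add_right, LinearMap.add_apply]

lemma key (E : YDData k H M) (hE : IsYD E) (f : Module.Dual k H) (m : M) :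
    map (πH k H) LinearMap.id (E.coact (E.act (((1:H) ⊗ₜ[k] f) ⊗ₜ[k] m)))
    = map (πH k H) (E.act ∘ₗ TensorProduct.mk k (X k H) M ((1:H) ⊗ₜ[k] f))
        (E.coact m) := by
  have h0 := LinearMap.congr_fun hE.yd (((1:H) ⊗ₜ[k] f) ⊗ₜ[k] m)
  simp only [LinearMap.comp_apply, LinearEquiv.coe_coe, TensorProduct.map_tmul,
    LinearMap.id_coe, id_eq] at h0
  rw [ΔX_ιD] at h0
  rw [← TensorProduct.map_comm] at h0
  have h1 := congrArg (map (πH k H) (LinearMap.id : M →ₗ[k] M)) h0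
  rw [keyL E m, keyR E] at h1
  rw [lid_comm_εD, ΔD_counit_r] at h1
  rw [ΔD_counit_l] at h1
  exact h1

end Aux7
noncomputable section Aux8
set_option synthInstance.maxHeartbeats 1000000
set_option maxHeartbeats 1600000
set_option maxRecDepth 8000
variable {k : Type} [Field k] {H : Type} [Ring H] [Bialgebra k H]
variable {M : Type} [AddCommGroup M] [Module k M] [FiniteDimensional k H]

lemma bicom_aux (A : X k H ⊗[k] M →ₗ[k] M) (z : X k H ⊗[k] M) :
    ∑ i : Basis.ofVectorSpaceIndex k H,
      (TensorProduct.assoc k H M H)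
        ((map (πH k H) (A ∘ₗ TensorProduct.mk k (X k H) M
            ((1:H) ⊗ₜ[k] (Basis.ofVectorSpace k H).coord i))) z
          ⊗ₜ[k] (Basis.ofVectorSpace k H) i)
      = map LinearMap.id (gcR A) (map (πH k H) LinearMap.id z) := by
  induction z using TensorProduct.induction_on with
  | zero => simp
  | tmul x m₀ =>
    simp only [TensorProduct.map_tmul, LinearMap.comp_apply, TensorProduct.mk_apply,
      LinearMap.id_coe, id_eq, TensorProduct.assoc_tmul]
    rw [← TensorProduct.tmul_sum, gcR_apply]
  | add u v hu hv =>
    simp only [map_add, TensorProduct.add_tmul, hu, hv, Finset.sum_add_distrib]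

lemma bicom_of_YD (E : YDData k H M) (hE : IsYD E) :
    (TensorProduct.assoc k H M H).toLinearMap ∘ₗ map (gcL E.coact) LinearMap.id ∘ₗ gcR E.act
      = map LinearMap.id (gcR E.act) ∘ₗ gcL E.coact := by
  apply LinearMap.ext; intro m
  simp only [LinearMap.comp_apply, LinearEquiv.coe_coe]
  rw [gcR_apply]
  simp only [_root_.map_sum, TensorProduct.map_tmul, LinearMap.id_coe, id_eq]
  simp only [gcL, LinearMap.comp_apply]
  calc ∑ i : Basis.ofVectorSpaceIndex k H,
        (TensorProduct.assoc k H M H)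
          ((map (πH k H) LinearMap.id
              (E.coact (E.act (((1:H) ⊗ₜ[k] (Basis.ofVectorSpace k H).coord i) ⊗ₜ[k] m))))
            ⊗ₜ[k] (Basis.ofVectorSpace k H) i)
      = ∑ i : Basis.ofVectorSpaceIndex k H,
        (TensorProduct.assoc k H M H)
          ((map (πH k H) (E.act ∘ₗ TensorProduct.mk k (X k H) M
              ((1:H) ⊗ₜ[k] (Basis.ofVectorSpace k H).coord i)) (E.coact m))
            ⊗ₜ[k] (Basis.ofVectorSpace k H) i) := by
        refine Finset.sum_congr rfl fun i _ => ?_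
        rw [key E hE]
    _ = map LinearMap.id (gcR E.act) (map (πH k H) LinearMap.id (E.coact m)) :=
        bicom_aux E.act (E.coact m)

end Aux8

/-- `ρ_L(m) = (id ⊗ ε^*)(m₍₋₁₎) ⊗ m₍₀₎` makes `M` a left `H`-comodule,
`ρ_R(m) = ∑ (1 ⊗ hⁱ)·m ⊗ hᵢ` makes `M` a right `H`-comodule, and together an
`H`-bicomodule. -/
theorem statement4 {k : Type} [Field k] {H : Type} [Ring H] [Bialgebra k H]
    [FiniteDimensional k H] {M : Type} [AddCommGroup M] [Module k M]
    (E : YDData k H M) (hE : IsYD E) :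
    IsLCom (Gdata E) ∧ IsRCom (Gdata E) ∧
      (TensorProduct.assoc k H M H).toLinearMap ∘ₗ map (Gdata E).cL LinearMap.id ∘ₗ
          (Gdata E).cR
        = map LinearMap.id (Gdata E).cR ∘ₗ (Gdata E).cL :=
  ⟨isLCom_of_YD E hE, isRCom_of_YD E hE, bicom_of_YD E hE⟩

end YDL
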